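/- Let u ∈ F_p^ℕ be the fixed point of the base-p parity substitution θ (θ(a) = (0 + a)(1 + a)⋯((p−1) + a), additions mod p) starting with 0, so that u_m is the sum mod p of the base-p digits of m. Then u is not eventually periodic: for every k ≥ 1 there exist arbitrarily large m with u_m ≠ u_{m+k}. -/

import Mathlib

/-- Digit sum of `a + p^t * b` splits when `a < p^t`. -/
lemma digits_sum_add_pow_mul {p : ℕ} (hp : 1 < p) (t a b : ℕ) (ha : a < p ^ t) :
    (p.digits (a + p ^ t * b)).sum = (p.digits a).sum + (p.digits b).sum := by
  rcases Nat.eq_zero_or_pos b with rfl | hb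
  · simp
  have hlen : (p.digits a).length ≤ t := by
    rcases Nat.eq_zero_or_pos a with rfl | ha0
    · simp
    · rw [Nat.digits_len p a hp ha0.ne']
      exact Nat.log_lt_of_lt_pow ha0.ne' ha
  obtain ⟨k, hk⟩ := Nat.exists_eq_add_of_le hlen
  have := Nat.digits_append_zeroes_append_digits (b := p) (k := k) (m := b) (n := a) hp hb
  rw [← hk] at this
  rw [← this, List.sum_append, List.sum_append, List.sum_replicate]
  simp

lemma digits_sum_pow_sub_one {p : ℕ} (hp : 1 < p) (n : ℕ) :
    (p.digits (p ^ n - 1)).sum = n * (p - 1) := by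
  induction n with
  | zero => simp
  | succ n ih =>
    have h1 : (1 : ℕ) ≤ p ^ n := Nat.one_le_pow _ _ (by omega)
    have key : p ^ (n + 1) - 1 = (p - 1) + p ^ 1 * (p ^ n - 1) := by
      have h : p ^ (n + 1) = p * p ^ n := by rw [pow_succ]; ring
      rw [pow_one, Nat.mul_sub, Nat.mul_one, h]
      have hpn : p ≤ p * p ^ n := Nat.le_mul_of_pos_right p (by positivity)
      omega
    rw [key, digits_sum_add_pow_mul hp 1 _ _ (by simpa using Nat.sub_lt (by omega) one_pos), ih]
    have : (p.digits (p - 1)).sum = p - 1 := by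
      rcases Nat.eq_zero_or_pos (p - 1) with h | h
      · omega
      · rw [Nat.digits_def' hp h, Nat.div_eq_of_lt (by omega)]
        simp [Nat.mod_eq_of_lt (show p - 1 < p by omega)]
    rw [this]; ring

/-- The fixed point of the base-`p` parity substitution starting with `0` is the base-`p`
digit-sum sequence `u_m = (sum of the base-p digits of m) mod p`.  It is not eventually
periodic: for every `k ≥ 1` there exist arbitrarily large `m` with `u_m ≠ u_{m+k}`. -/
theorem parity_fixed_point_not_eventually_periodic (p : ℕ) (hp : p.Prime) :
    ∀ k : ℕ, 1 ≤ k → ∀ N : ℕ, ∃ m : ℕ, N ≤ m ∧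
      (((p.digits m).sum : ZMod p) ≠ ((p.digits (m + k)).sum : ZMod p)) := by
  intro k hk N
  have hp1 : 1 < p := hp.one_lt
  -- choose t with k < p ^ t
  obtain ⟨t, ht⟩ : ∃ t, k < p ^ t := ⟨k, (Nat.lt_pow_self hp1 : k < p ^ k)⟩
  -- for any n ≥ 1, m n := p^t * (p^n - 1) + (p^t - k) satisfies m n + k = p^(t+n)
  set S : ℕ := (p.digits (p ^ t - k)).sum with hS
  -- digit sum of m n
  have hsum : ∀ n : ℕ, (p.digits (p ^ t * (p ^ n - 1) + (p ^ t - k))).sum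
      = S + n * (p - 1) := by
    intro n
    rw [Nat.add_comm, digits_sum_add_pow_mul hp1 t _ _ (by omega),
      digits_sum_pow_sub_one hp1]
  have hmk : ∀ n : ℕ, (p ^ t * (p ^ n - 1) + (p ^ t - k)) + k = p ^ (t + n) := by
    intro n
    have h1 : (1 : ℕ) ≤ p ^ n := Nat.one_le_pow _ _ (by omega)
    have : p ^ t * (p ^ n - 1) = p ^ t * p ^ n - p ^ t := by
      rw [Nat.mul_sub, Nat.mul_one]
    rw [this, pow_add]
    have hle : p ^ t ≤ p ^ t * p ^ n := Nat.le_mul_of_pos_right _ (by positivity)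
    omega
  have hsumpow : ∀ s : ℕ, (p.digits (p ^ s)).sum = 1 := by
    intro s
    have : p ^ s = 0 + p ^ s * 1 := by ring
    rw [this, digits_sum_add_pow_mul hp1 s 0 1 (by positivity)]
    simp [Nat.digits_def' hp1 one_pos, Nat.mod_eq_of_lt hp1,
      Nat.div_eq_of_lt hp1]
  -- pick n ∈ {N+1, N+2} so that the difference is nonzero mod p
  have key : ∀ n : ℕ, ((p.digits (p ^ t * (p ^ n - 1) + (p ^ t - k))).sum : ZMod p)
      = (S : ZMod p) - n := by
    intro n
    rw [hsum n]
    push_cast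
    have : ((p : ZMod p)) = 0 := by exact_mod_cast ZMod.natCast_self p
    have hcast : ((p - 1 : ℕ) : ZMod p) = -1 := by
      have : ((p - 1 : ℕ) : ZMod p) = (p : ZMod p) - 1 := by
        have : (1 : ℕ) ≤ p := by omega
        push_cast [Nat.cast_sub this]
        ring
      rw [this, ZMod.natCast_self]; ring
    rw [hcast]; ring
  have hNe : ∃ n : ℕ, N + 1 ≤ n ∧ ((S : ZMod p) - n ≠ 1) := by
    by_cases h1 : (S : ZMod p) - (N + 1 : ℕ) ≠ 1
    · exact ⟨N + 1, le_refl _, h1⟩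
    · refine ⟨N + 2, by omega, ?_⟩
      push_neg at h1
      intro h2
      have hNN : ((N + 1 : ℕ) : ZMod p) = ((N + 2 : ℕ) : ZMod p) := by
        have := h1.trans h2.symm
        linear_combination -this
      push_cast at hNN
      haveI : Fact p.Prime := ⟨hp⟩
      exact one_ne_zero (by linear_combination -hNN : (1 : ZMod p) = 0)
  obtain ⟨n, hn1, hn2⟩ := hNe
  refine ⟨p ^ t * (p ^ n - 1) + (p ^ t - k), ?_, ?_⟩
  · have h1 : n ≤ p ^ n - 1 := by
      have := (Nat.lt_pow_self hp1 : n < p ^ n)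
      omega
    have h2 : p ^ n - 1 ≤ p ^ t * (p ^ n - 1) := Nat.le_mul_of_pos_left _ (by positivity)
    omega
  · rw [key n, hmk n, hsumpow]
    exact_mod_cast hn2
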